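/- Suppose z⁰ ∈ ℂⁿ satisfies ∂W/∂z_j(z⁰) = 0 for every j with q_j ≥ 2. Then along the path z(α) = (e^{q₁α}z₁⁰,…,e^{qₙα}zₙ⁰) with α ∈ ℝ, the scalar potential satisfies V(z(α)) → 0 as α → −∞; in particular, the infimum of V over ℂⁿ is 0 (supersymmetry is restored asymptotically along a runaway direction or at a supersymmetric vacuum). -/

import Mathlib

open Complex Filter Topology

lemma fderiv_rcharge_scale
    (n : ℕ) (W : (Fin n → ℂ) → ℂ) (hW : Differentiable ℂ W)
    (q : Fin n → ℝ)
    (hR : ∀ (α : ℂ) (z : Fin n → ℂ),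
      W (fun j => Complex.exp ((q j : ℂ) * α) * z j) = Complex.exp (2 * α) * W z)
    (z0 : Fin n → ℂ) (α : ℂ) (j : Fin n) :
    fderiv ℂ W (fun k => Complex.exp ((q k : ℂ) * α) * z0 k) (Pi.single j 1)
      = Complex.exp ((2 - (q j : ℂ)) * α) * fderiv ℂ W z0 (Pi.single j 1) := by
  set L : (Fin n → ℂ) →L[ℂ] (Fin n → ℂ) :=
    ContinuousLinearMap.pi
      (fun k => Complex.exp ((q k : ℂ) * α) • ContinuousLinearMap.proj k) with hLdef
  have hLz : ∀ z : Fin n → ℂ, L z = fun k => Complex.exp ((q k : ℂ) * α) * z k := by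
    intro z; rfl
  have hcomp : (fun z => W (L z)) = fun z => Complex.exp (2 * α) * W z := by
    funext z
    rw [hLz]
    exact hR α z
  have h1 : fderiv ℂ (fun z => W (L z)) z0 = (fderiv ℂ W (L z0)).comp L := by
    have := fderiv_comp z0 (hW (L z0)) L.differentiableAt
    simpa [L.fderiv, Function.comp_def] using this
  have h2 : fderiv ℂ (fun z => Complex.exp (2 * α) * W z) z0
      = Complex.exp (2 * α) • fderiv ℂ W z0 := fderiv_const_mul (hW z0) _
  have h3 : (fderiv ℂ W (L z0)).comp L = Complex.exp (2 * α) • fderiv ℂ W z0 := by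
    rw [← h1, hcomp, h2]
  have hLsj : L (Pi.single j 1) = Complex.exp ((q j : ℂ) * α) • (Pi.single j 1 : Fin n → ℂ) := by
    rw [hLz]
    funext k
    by_cases h : k = j
    · subst h; simp
    · simp [Pi.single_apply, h]
  have h4 := congrArg (fun T : (Fin n → ℂ) →L[ℂ] ℂ => T (Pi.single j 1)) h3
  simp only [ContinuousLinearMap.comp_apply, ContinuousLinearMap.smul_apply,
    smul_eq_mul] at h4
  rw [hLsj, map_smul, smul_eq_mul] at h4
  have hexp : Complex.exp ((q j : ℂ) * α) * Complex.exp ((2 - (q j : ℂ)) * α)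
      = Complex.exp (2 * α) := by
    rw [← Complex.exp_add]; ring_nf
  apply mul_left_cancel₀ (Complex.exp_ne_zero ((q j : ℂ) * α))
  rw [← hLz, h4, ← mul_assoc, hexp]

/-- Let `W : ℂⁿ → ℂ` be holomorphic with R-charge 2 under the complexified
R-symmetry, and let `V(z) = Σⱼ |∂W/∂z_j(z)|²`. If `z⁰` satisfies `∂W/∂z_j(z⁰) = 0` for every
`j` with `q_j ≥ 2`, then along the path `z(α) = (e^{q₁α}z₁⁰,…,e^{qₙα}zₙ⁰)`, `α ∈ ℝ`, one has
`V(z(α)) → 0` as `α → −∞`; in particular `inf V = 0` over `ℂⁿ`. -/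
theorem runaway_atBot_restores_susy
    (n : ℕ) (W : (Fin n → ℂ) → ℂ) (hW : Differentiable ℂ W)
    (q : Fin n → ℝ)
    (hR : ∀ (α : ℂ) (z : Fin n → ℂ),
      W (fun j => Complex.exp ((q j : ℂ) * α) * z j) = Complex.exp (2 * α) * W z)
    (V : (Fin n → ℂ) → ℝ)
    (hV : ∀ z, V z = ∑ j, ‖fderiv ℂ W z (Pi.single j 1)‖ ^ 2)
    (z0 : Fin n → ℂ)
    (hz0 : ∀ j, 2 ≤ q j → fderiv ℂ W z0 (Pi.single j 1) = 0) :
    Tendsto (fun α : ℝ => V (fun j => Complex.exp ((q j : ℂ) * (α : ℂ)) * z0 j))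
      atBot (nhds 0) ∧
    IsGLB (Set.range V) 0 := by
  have key : ∀ (α : ℝ) (j : Fin n),
      fderiv ℂ W (fun k => Complex.exp ((q k : ℂ) * (α : ℂ)) * z0 k) (Pi.single j 1)
        = Complex.exp ((2 - (q j : ℂ)) * (α : ℂ)) * fderiv ℂ W z0 (Pi.single j 1) :=
    fun α j => fderiv_rcharge_scale n W hW q hR z0 (α : ℂ) j
  have hT : Tendsto (fun α : ℝ => V (fun j => Complex.exp ((q j : ℂ) * (α : ℂ)) * z0 j))
      atBot (nhds 0) := by
    have : ∀ α : ℝ, V (fun j => Complex.exp ((q j : ℂ) * (α : ℂ)) * z0 j)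
        = ∑ j, (Real.exp ((2 - q j) * α)) ^ 2 * ‖fderiv ℂ W z0 (Pi.single j 1)‖ ^ 2 := by
      intro α
      rw [hV]
      refine Finset.sum_congr rfl fun j _ => ?_
      rw [key α j, norm_mul, mul_pow, Complex.norm_exp]
      congr 2
      simp [Complex.mul_re]
    simp only [this]
    have h0 : (0 : ℝ) = ∑ j : Fin n, (0 : ℝ) := by simp
    rw [h0]
    apply tendsto_finset_sum
    intro j _
    by_cases hq : 2 ≤ q j
    · simp [hz0 j hq]
    · push_neg at hq
      have hc : 0 < 2 - q j := by linarith
      have hexp : Tendsto (fun α : ℝ => Real.exp ((2 - q j) * α)) atBot (nhds 0) :=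
        Real.tendsto_exp_atBot.comp (tendsto_id.const_mul_atBot hc)
      have := (hexp.pow 2).mul_const (‖fderiv ℂ W z0 (Pi.single j 1)‖ ^ 2)
      simpa using this
  refine ⟨hT, ?_, ?_⟩
  · rintro y ⟨z, rfl⟩
    rw [hV]
    positivity
  · intro b hb
    exact ge_of_tendsto' hT (fun α => hb ⟨_, rfl⟩)
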